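/- arXiv:0811.0699 — 2 statements merged into one kernel-verified Lean document; each statement's English description precedes it below -/
import Mathlib

section
/- Let f : {0,1}^n → {0,1} be a Boolean function and let S be the set of all x ∈ {0,1}^n such that every chain starting with x has decrease 0 with respect to f. Define f_1 by f_1(x) = f(x) if x ∈ S and f_1(x) = 0 otherwise. Then d(f_1) = 0; that is, f_1 is monotone. -/
namespace InversionComplexity

open Classical

/-- A chain is a strictly increasing sequence of Boolean vectors in `{0,1}^n`
(pointwise order on `Fin n → Bool`). -/
def IsChain {n : ℕ} (X : List (Fin n → Bool)) : Prop :=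
  X.Chain' (· < ·)

/-- The decrease `d_X(f)` of `f` on a sequence `X`: the number of consecutive
indices `i` with `f (x^i) = 1` and `f (x^{i+1}) = 0`. -/
def decOn {n : ℕ} (f : (Fin n → Bool) → Bool) : List (Fin n → Bool) → ℕ
  | a :: b :: t => (if f a = true ∧ f b = false then 1 else 0) + decOn f (b :: t)
  | _ => 0

/-- The decrease `d(f)` of `f`: the maximum of `d_X(f)` over all chains `X`. -/
noncomputable def dec {n : ℕ} (f : (Fin n → Bool) → Bool) : ℕ :=
  sSup { m | ∃ X : List (Fin n → Bool), IsChain X ∧ decOn f X = m }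

/-- Boolean formulas: finite trees built from variable leaves, constant leaves,
binary AND/OR nodes and unary NOT nodes. -/
inductive Formula (n : ℕ) : Type
  | var : Fin n → Formula n
  | const : Bool → Formula n
  | and : Formula n → Formula n → Formula n
  | or : Formula n → Formula n → Formula n
  | not : Formula n → Formula n

/-- Evaluation of a formula on an input. -/
def Formula.eval {n : ℕ} (x : Fin n → Bool) : Formula n → Bool
  | .var i => x i
  | .const b => b
  | .and C D => C.eval x && D.eval x
  | .or C D => C.eval x || D.eval x
  | .not C => !(C.eval x)

/-- `not(C)`: the number of NOT nodes of a formula. -/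
def Formula.notCount {n : ℕ} : Formula n → ℕ
  | .var _ => 0
  | .const _ => 0
  | .and C D => C.notCount + D.notCount
  | .or C D => C.notCount + D.notCount
  | .not C => C.notCount + 1

/-- `not_d(C, x)`: the number of NOT nodes of `C` in the *down* state on input `x`,
i.e. whose input subformula evaluates to `1`. -/
def Formula.notDown {n : ℕ} (x : Fin n → Bool) : Formula n → ℕ
  | .var _ => 0
  | .const _ => 0
  | .and C D => C.notDown x + D.notDown x
  | .or C D => C.notDown x + D.notDown x
  | .not C => C.notDown x + (if C.eval x = true then 1 else 0)

/-- A formula computes a Boolean function `f` if it evaluates to `f x` on every input `x`. -/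
def Formula.Computes {n : ℕ} (C : Formula n) (f : (Fin n → Bool) → Bool) : Prop :=
  ∀ x, C.eval x = f x

/-- `I_f(f)`: the inversion complexity of `f` in formulas, the minimum number of
NOT nodes over all formulas computing `f`. -/
noncomputable def invFormula {n : ℕ} (f : (Fin n → Bool) → Bool) : ℕ :=
  sInf { k | ∃ C : Formula n, C.Computes f ∧ C.notCount = k }

/-- The set `S` of all vectors `x` such that every chain starting with `x`
has decrease `0` with respect to `f`. -/
def startSet {n : ℕ} (f : (Fin n → Bool) → Bool) : Set (Fin n → Bool) :=
  { x | ∀ X : List (Fin n → Bool), IsChain X → X.head? = some x → decOn f X = 0 }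

lemma decOn_mono_zero {n : ℕ} {g : (Fin n → Bool) → Bool} (hg : Monotone g) :
    ∀ X : List (Fin n → Bool), IsChain X → decOn g X = 0
  | [] => fun _ => rfl
  | [_] => fun _ => rfl
  | a :: b :: t => fun h => by
    rw [IsChain, List.Chain', List.isChain_cons_cons] at h
    have hle : g a ≤ g b := hg (le_of_lt h.1)
    have : ¬(g a = true ∧ g b = false) := by
      rintro ⟨h1, h2⟩; rw [h1, h2] at hle; exact absurd hle (by decide)
    simp only [decOn, if_neg this, zero_add]
    exact decOn_mono_zero hg (b :: t) h.2

/-- If `f₁ x = f x` for `x ∈ S` and `f₁ x = 0` otherwise, then `d(f₁) = 0`,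
i.e. `f₁` is monotone. -/
theorem decrease_f1_eq_zero (n : ℕ) (f : (Fin n → Bool) → Bool) :
    dec (fun x => if x ∈ startSet f then f x else false) = 0 ∧
    Monotone (fun x => if x ∈ startSet f then f x else false) := by
  set f₁ : (Fin n → Bool) → Bool := fun x => if x ∈ startSet f then f x else false with hf₁
  have hmono : Monotone f₁ := by
    intro x y hxy
    rcases eq_or_lt_of_le hxy with rfl | hlt
    · exact le_rfl
    rw [Bool.le_iff_imp]
    intro hx
    have hxS : x ∈ startSet f ∧ f x = true := by
      by_cases h : x ∈ startSet f
      · exact ⟨h, by simpa [hf₁, h] using hx⟩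
      · simp [hf₁, h] at hx
    have hyS : y ∈ startSet f := by
      intro X hX hhead
      cases X with
      | nil => simp at hhead
      | cons b t =>
        have hb : b = y := by simpa using hhead
        subst hb
        have hchain : IsChain (x :: b :: t) := by
          rw [IsChain, List.Chain', List.isChain_cons_cons]; exact ⟨hlt, hX⟩
        have h0 := hxS.1 (x :: b :: t) hchain rfl
        simp only [decOn] at h0
        omega
    have hfy : f y = true := by
      by_contra hfy
      have hchain : IsChain [x, y] := by
        rw [IsChain, List.Chain']; simpa using hlt
      have h0 := hxS.1 [x, y] hchain rfl
      simp only [decOn] at h0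
      rw [if_pos ⟨hxS.2, Bool.eq_false_iff.mpr (fun h => hfy h)⟩] at h0
      omega
    simp [hf₁, hyS, hfy]
  refine ⟨?_, hmono⟩
  have hset : { m | ∃ X : List (Fin n → Bool), IsChain X ∧ decOn f₁ X = m } = {0} := by
    ext m
    constructor
    · rintro ⟨X, hX, rfl⟩
      exact decOn_mono_zero hmono X hX
    · rintro rfl
      exact ⟨[], by simp [IsChain, List.Chain'], rfl⟩
  rw [dec, hset, csSup_singleton]

end InversionComplexity
end

section
/- Let f : {0,1}^n → {0,1} be a Boolean function with d(f) ≥ 1 and let S be the set of all x ∈ {0,1}^n such that every chain starting with x has decrease 0 with respect to f. Define f_2 by f_2(x) = 1 if x ∈ S and f_2(x) = f(x) otherwise. Then d(f_2) ≤ d(f) − 1. -/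
namespace InversionComplexity

open Classical

variable {n : ℕ} {f : (Fin n → Bool) → Bool}

lemma decOn_le_length (f : (Fin n → Bool) → Bool) : ∀ X, decOn f X ≤ X.length
  | [] => le_refl _
  | [_] => Nat.zero_le _
  | a :: b :: t => by
    have := decOn_le_length f (b :: t)
    simp only [List.length_cons] at this ⊢
    simp only [decOn]
    split <;> omega

lemma bddAbove_decSet (f : (Fin n → Bool) → Bool) :
    BddAbove {m | ∃ X, IsChain X ∧ decOn f X = m} := by
  refine ⟨Fintype.card (Fin n → Bool), ?_⟩
  rintro m ⟨X, hX, rfl⟩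
  calc decOn f X ≤ X.length := decOn_le_length f X
    _ ≤ _ := List.Nodup.length_le_card ((List.isChain_iff_pairwise.mp hX).imp ne_of_lt)

lemma decOn_le_dec {X : List (Fin n → Bool)} (hX : IsChain X) : decOn f X ≤ dec f :=
  le_csSup (bddAbove_decSet f) ⟨X, hX, rfl⟩

lemma decOn_tail_le (f : (Fin n → Bool) → Bool) (a : Fin n → Bool) (X : List (Fin n → Bool)) :
    decOn f X ≤ decOn f (a :: X) := by
  cases X with
  | nil => simp [decOn]
  | cons b t => exact Nat.le_add_left _ _

lemma startSet_upclosed {x y : Fin n → Bool} (hx : x ∈ startSet f) (hxy : x ≤ y) :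
    y ∈ startSet f := by
  intro X hX hhead
  rcases eq_or_lt_of_le hxy with rfl | hlt
  · exact hx X hX hhead
  · have hchain : IsChain (x :: X) := by
      rw [IsChain, List.Chain', List.isChain_cons]
      refine ⟨fun z hz => ?_, hX⟩
      rw [hhead] at hz
      cases hz
      exact hlt
    have h0 := hx (x :: X) hchain rfl
    have := decOn_tail_le f x X
    omega

lemma claimA (g : (Fin n → Bool) → Bool) (hg : ∀ x, x ∈ startSet f → g x = true) :
    ∀ X : List (Fin n → Bool), IsChain X → (∀ a, X.head? = some a → a ∈ startSet f) →
      decOn g X = 0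
  | [] => fun _ _ => rfl
  | [_] => fun _ _ => rfl
  | a :: b :: t => fun hX hh => by
    rw [IsChain, List.Chain', List.isChain_cons_cons] at hX
    have ha : a ∈ startSet f := hh a rfl
    have hb : b ∈ startSet f := startSet_upclosed ha (le_of_lt hX.1)
    have hrec := claimA g hg (b :: t) hX.2 (fun c hc => by
      rw [List.head?_cons] at hc; cases hc; exact hb)
    simp only [decOn, hrec, add_zero]
    simp [hg b hb]

lemma claimC (g : (Fin n → Bool) → Bool)
    (hg1 : ∀ x, x ∈ startSet f → g x = true) (hg2 : ∀ x, x ∉ startSet f → g x = f x) :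
    ∀ (X : List (Fin n → Bool)) (a : Fin n → Bool), IsChain X → X.head? = some a →
      a ∉ startSet f →
      ∃ Z, IsChain Z ∧ Z.head? = some a ∧ decOn g X + 1 ≤ decOn f Z
  | [], a => by simp
  | [a'], a => fun _ hh ha => by
    rw [List.head?_cons, Option.some_inj] at hh
    subst hh
    simp only [startSet, Set.mem_setOf_eq, not_forall] at ha
    obtain ⟨Y, hY, hhY, hne⟩ := ha
    exact ⟨Y, hY, hhY, by have : decOn f Y ≠ 0 := hne; simp [decOn]; omega⟩
  | a' :: b :: t, a => fun hX hh ha => by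
    rw [List.head?_cons, Option.some_inj] at hh
    subst hh
    rw [IsChain, List.Chain', List.isChain_cons_cons] at hX
    by_cases hb : b ∈ startSet f
    · -- decOn g (a' :: b :: t) = 0
      have h0 : decOn g (a' :: b :: t) = 0 := by
        have hrec := claimA g hg1 (b :: t) hX.2 (fun c hc => by
          rw [List.head?_cons] at hc; cases hc; exact hb)
        simp only [decOn, hrec, add_zero]
        simp [hg1 b hb]
      simp only [startSet, Set.mem_setOf_eq, not_forall] at ha
      obtain ⟨Y, hY, hhY, hne⟩ := ha
      exact ⟨Y, hY, hhY, by have : decOn f Y ≠ 0 := hne; omega⟩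
    · obtain ⟨Z', hZ', hhZ', hle⟩ := claimC g hg1 hg2 (b :: t) b hX.2 rfl hb
      obtain ⟨c, t', rfl⟩ : ∃ c t', Z' = c :: t' := by
        cases Z' with
        | nil => simp at hhZ'
        | cons c t' => exact ⟨c, t', rfl⟩
      rw [List.head?_cons] at hhZ'; cases hhZ'
      refine ⟨a' :: b :: t', ?_, rfl, ?_⟩
      · rw [IsChain, List.Chain', List.isChain_cons_cons]
        exact ⟨hX.1, hZ'⟩
      · have heq : (if g a' = true ∧ g b = false then 1 else 0)
            = (if f a' = true ∧ f b = false then (1:ℕ) else 0) := by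
          rw [hg2 a' ha, hg2 b hb]
        calc decOn g (a' :: b :: t) + 1
            = (if g a' = true ∧ g b = false then 1 else 0) + (decOn g (b :: t) + 1) := by
              simp [decOn]; ring
          _ ≤ (if f a' = true ∧ f b = false then 1 else 0) + decOn f (b :: t') := by
              rw [heq]; omega
          _ = decOn f (a' :: b :: t') := by simp [decOn]

/-- If `d(f) ≥ 1` and `f₂ x = 1` for `x ∈ S`, `f₂ x = f x` otherwise,
then `d(f₂) ≤ d(f) - 1`. -/
theorem decrease_f2_le (n : ℕ) (f : (Fin n → Bool) → Bool) (hf : 1 ≤ dec f) :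
    dec (fun x => if x ∈ startSet f then true else f x) ≤ dec f - 1 := by
  set g : (Fin n → Bool) → Bool := fun x => if x ∈ startSet f then true else f x with hgdef
  have hg1 : ∀ x, x ∈ startSet f → g x = true := fun x hx => by simp [hgdef, hx]
  have hg2 : ∀ x, x ∉ startSet f → g x = f x := fun x hx => by simp [hgdef, hx]
  have hne : (0:ℕ) ∈ {m | ∃ X : List (Fin n → Bool), IsChain X ∧ decOn g X = m} :=
    ⟨[], List.isChain_nil, rfl⟩
  refine csSup_le ⟨0, hne⟩ ?_
  rintro m ⟨X, hX, rfl⟩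
  cases hXh : X.head? with
  | none =>
    have : X = [] := List.head?_eq_none_iff.mp hXh
    subst this
    simp [decOn]
  | some a =>
    by_cases ha : a ∈ startSet f
    · have h0 := claimA g hg1 X hX (fun c hc => by rw [hXh] at hc; cases hc; exact ha)
      omega
    · obtain ⟨Z, hZ, _, hle⟩ := claimC g hg1 hg2 X a hX hXh ha
      have h2 : decOn f Z ≤ dec f := decOn_le_dec hZ
      omega

end InversionComplexity
end
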